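/- For every real 0 < ε ≤ 1 and all integers k, ℓ, q, τ with k ≥ 2 and ℓ, q, τ ≥ 1 there exists an integer n with the following property: if N is a finite τ-sparse subset of ℕ with |N| ≥ n and F is a family of subsets of [k]^{<ℕ} with |F| = q, then there exists a subset L of N with |L| = ℓ such that F is (ε, τ, L)-regular. -/

import Mathlib

/-- A word over `k`: a finite sequence with values in `[k]`. -/
abbrev Word (k : ℕ) := List (Fin k)

/-- The density `dens_{[k]^n}(A) = |A ∩ [k]^n| / k^n`. -/
noncomputable def dens (k n : ℕ) (A : Set (Word k)) : ℝ :=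
  (Set.ncard {x ∈ A | x.length = n} : ℝ) / (k : ℝ) ^ n

/-- `L` is `τ`-sparse: any two distinct elements of `L` differ by at least `τ`. -/
def Sparse (τ : ℕ) (L : Finset ℕ) : Prop :=
  ∀ l ∈ L, ∀ l' ∈ L, l < l' → l + τ ≤ l'

/-- The `τ`-extension `(I)_τ = I + {0, …, τ-1}` of a finset `I ⊆ ℕ`. -/
def tauExt (τ : ℕ) (I : Finset ℕ) : Finset ℕ :=
  I.biUnion fun l => Finset.Ico l (l + τ)

/-- The density, in `[k]^{{0,…,n-1} ∖ (I)_τ}`, of the section of `A ∩ [k]^n` at the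
located word `y ∈ [k]^{(I)_τ}` (encoded by a function `ℕ → Fin k`, only the values on
`(I)_τ` being relevant). -/
noncomputable def secDensτ (k n τ : ℕ) (I : Finset ℕ) (y : ℕ → Fin k)
    (A : Set (Word k)) : ℝ :=
  (Set.ncard {x ∈ A | x.length = n ∧ ∀ i ∈ tauExt τ I, x[i]? = some (y i)} : ℝ) /
    (k : ℝ) ^ (n - (tauExt τ I).card)

/-- A family `F` of subsets of `[k]^{<ℕ}` is `(ε, τ, L)`-regular. -/
def RegularFamilyτ (k : ℕ) (ε : ℝ) (τ : ℕ) (L : Finset ℕ)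
    (F : Finset (Set (Word k))) : Prop :=
  ∀ A ∈ F, ∀ n ∈ L, ∀ I : Finset ℕ, I ⊆ L.filter (· < n) → ∀ y : ℕ → Fin k,
    |secDensτ k n τ I y A - dens k n A| ≤ ε


namespace SR
open Finset

variable {k n : ℕ}

abbrev X (k n : ℕ) := Fin n → Fin k

def Agr (E : Finset ℕ) (x p : X k n) : Prop := ∀ i : Fin n, (i : ℕ) ∈ E → x i = p i

instance (E : Finset ℕ) (x p : X k n) : Decidable (Agr E x p) := by
  unfold Agr; infer_instance

lemma Agr.symm {E : Finset ℕ} {x p : X k n} (h : Agr E x p) : Agr E p x :=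
  fun i hi => (h i hi).symm

lemma agr_comm {E : Finset ℕ} {x p : X k n} : Agr E x p ↔ Agr E p x :=
  ⟨Agr.symm, Agr.symm⟩

def cnt (A : Finset (X k n)) (E : Finset ℕ) (p : X k n) : ℕ :=
  (A.filter fun x => Agr E x p).card

/-- the basic count: patterns on `E ⊆ [0,n)` have `k^(n - |E|)` extensions. -/
lemma cnt_univ (hk : 0 < k) (E : Finset ℕ) (hE : ∀ i ∈ E, i < n) (p : X k n) :
    cnt (univ : Finset (X k n)) E p = k ^ (n - E.card) := by
  have : cnt (univ : Finset (X k n)) E p = Fintype.card {x : X k n // Agr E x p} := by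
    rw [Fintype.card_subtype]; rfl
  rw [this]
  have e : {x : X k n // Agr E x p} ≃ ({i : Fin n // (i : ℕ) ∉ E} → Fin k) := by
    refine ⟨fun x i => x.1 i.1, fun g => ⟨fun j => if h : (j : ℕ) ∈ E then p j else g ⟨j, h⟩, fun i hi => by simp [hi]⟩, ?_, ?_⟩
    · intro x
      apply Subtype.ext
      funext j
      by_cases h : (j : ℕ) ∈ E
      · simp [h, x.2 j h]
      · simp [h]
    · intro g
      funext i
      simp [i.2]
  rw [Fintype.card_congr e, Fintype.card_fun, Fintype.card_fin]
  congr 1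
  rw [Fintype.card_subtype]
  have hcard : (univ.filter fun i : Fin n => (i : ℕ) ∈ E).card = E.card := by
    apply Finset.card_bij (fun (i : Fin n) (_ : i ∈ univ.filter fun i : Fin n => (i : ℕ) ∈ E) => (i : ℕ))
    · intro a ha; simpa using ha
    · intro a ha b hb hab; exact Fin.ext hab
    · intro b hb
      exact ⟨⟨b, hE b hb⟩, by simpa using hb, rfl⟩
  rw [Finset.filter_not, Finset.card_sdiff_of_subset (Finset.filter_subset _ _), hcard, Finset.card_univ, Fintype.card_fin]

-- filter with flipped agreement has the same count
lemma card_filter_agr (E : Finset ℕ) (A : Finset (X k n)) (p : X k n) :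
    (A.filter fun x => Agr E p x).card = cnt A E p := by
  unfold cnt; congr 1; apply Finset.filter_congr; intro x _
  constructor <;> exact fun h => h.symm

lemma cnt_eq_sum (A : Finset (X k n)) (E : Finset ℕ) (p : X k n) :
    cnt A E p = ∑ x ∈ A, if Agr E x p then 1 else 0 := by
  rw [cnt, Finset.card_filter]

/-- identity (A) -/
lemma sum_cnt (hk : 0 < k) {E : Finset ℕ} (hE : ∀ i ∈ E, i < n) (A : Finset (X k n)) :
    ∑ p : X k n, cnt A E p = A.card * k ^ (n - E.card) := by
  calc ∑ p : X k n, cnt A E p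
      = ∑ p : X k n, ∑ x ∈ A, if Agr E x p then 1 else 0 := by
        simp only [cnt_eq_sum]
    _ = ∑ x ∈ A, ∑ p : X k n, if Agr E x p then 1 else 0 := Finset.sum_comm
    _ = ∑ x ∈ A, k ^ (n - E.card) := by
        refine Finset.sum_congr rfl fun x _ => ?_
        rw [← Finset.card_filter, card_filter_agr, cnt_univ hk E hE]
    _ = A.card * k ^ (n - E.card) := by rw [Finset.sum_const, smul_eq_mul]


/-- identity (B): orthogonal counting on disjoint coordinate sets. -/
lemma sum_cnt_mul_cnt (hk : 0 < k) {E F : Finset ℕ} (hE : ∀ i ∈ E, i < n)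
    (hF : ∀ i ∈ F, i < n) (hEF : Disjoint E F) (A B : Finset (X k n)) :
    ∑ p : X k n, cnt A E p * cnt B F p = A.card * B.card * k ^ (n - E.card - F.card) := by
  have key : ∀ x x' : X k n,
      (∑ p : X k n, if Agr E x p ∧ Agr F x' p then 1 else 0) = k ^ (n - E.card - F.card) := by
    intro x x'
    set m : X k n := fun i => if (i : ℕ) ∈ E then x i else x' i with hm
    have hiff : ∀ p : X k n, (Agr E x p ∧ Agr F x' p) ↔ Agr (E ∪ F) p m := by
      intro p
      constructor
      · rintro ⟨h1, h2⟩ i hi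
        rcases Finset.mem_union.1 hi with h | h
        · rw [hm]; simp only [h, if_true]; exact (h1 i h).symm
        · have hne : (i : ℕ) ∉ E := fun hc => (Finset.disjoint_left.1 hEF hc) h
          rw [hm]; simp only [hne, if_false]; exact (h2 i h).symm
      · intro hp
        constructor
        · intro i hi
          have := hp i (Finset.mem_union_left _ hi)
          rw [hm] at this; simp only [hi, if_true] at this; exact this.symm
        · intro i hi
          have hne : (i : ℕ) ∉ E := fun hc => (Finset.disjoint_left.1 hEF hc) hi
          have := hp i (Finset.mem_union_right _ hi)
          rw [hm] at this; simp only [hne, if_false] at this; exact this.symm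
    have : (∑ p : X k n, if Agr E x p ∧ Agr F x' p then 1 else 0)
        = cnt (univ : Finset (X k n)) (E ∪ F) m := by
      rw [← Finset.card_filter, cnt]
      congr 1
      apply Finset.filter_congr
      intro p _
      exact hiff p
    have hEFn : ∀ i ∈ E ∪ F, i < n := by
      intro i hi; rcases Finset.mem_union.1 hi with h | h
      exacts [hE i h, hF i h]
    rw [this, cnt_univ hk (E ∪ F) hEFn m, Finset.card_union_of_disjoint hEF, Nat.sub_sub]
  calc ∑ p : X k n, cnt A E p * cnt B F p
      = ∑ p : X k n, ∑ x ∈ A, ∑ x' ∈ B, if Agr E x p ∧ Agr F x' p then 1 else 0 := by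
        refine Finset.sum_congr rfl fun p _ => ?_
        rw [cnt_eq_sum, cnt_eq_sum, Finset.sum_mul_sum]
        refine Finset.sum_congr rfl fun x _ => Finset.sum_congr rfl fun x' _ => ?_
        by_cases h1 : Agr E x p <;> by_cases h2 : Agr F x' p <;> simp [h1, h2]
    _ = ∑ x ∈ A, ∑ x' ∈ B, ∑ p : X k n, if Agr E x p ∧ Agr F x' p then 1 else 0 := by
        rw [Finset.sum_comm]
        refine Finset.sum_congr rfl fun x _ => Finset.sum_comm
    _ = ∑ x ∈ A, ∑ x' ∈ B, k ^ (n - E.card - F.card) := by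
        exact Finset.sum_congr rfl fun x _ => Finset.sum_congr rfl fun x' _ => key x x'
    _ = A.card * B.card * k ^ (n - E.card - F.card) := by
        simp [Finset.sum_const, mul_assoc]

/-- identity (C): second moment. -/
lemma sum_cnt_sq (hk : 0 < k) {E : Finset ℕ} (hE : ∀ i ∈ E, i < n) (A : Finset (X k n)) :
    ∑ p : X k n, cnt A E p * cnt A E p = k ^ (n - E.card) * ∑ p ∈ A, cnt A E p := by
  have key : ∀ x x' : X k n,
      (∑ p : X k n, if Agr E x p ∧ Agr E x' p then 1 else 0)
        = if Agr E x x' then k ^ (n - E.card) else 0 := by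
    intro x x'
    by_cases hxx : Agr E x x'
    · rw [if_pos hxx]
      have : ∀ p : X k n, (Agr E x p ∧ Agr E x' p) ↔ Agr E x p := by
        intro p
        refine ⟨fun h => h.1, fun h => ⟨h, fun i hi => ?_⟩⟩
        rw [← hxx i hi]; exact h i hi
      calc (∑ p : X k n, if Agr E x p ∧ Agr E x' p then 1 else 0)
          = ∑ p : X k n, if Agr E x p then 1 else 0 := by
            refine Finset.sum_congr rfl fun p _ => ?_; rw [if_congr (this p) rfl rfl]
        _ = k ^ (n - E.card) := by
            rw [← Finset.card_filter, card_filter_agr, cnt_univ hk E hE]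
    · rw [if_neg hxx]
      refine Finset.sum_eq_zero fun p _ => ?_
      rw [if_neg]
      rintro ⟨h1, h2⟩
      exact hxx fun i hi => (h1 i hi).trans (h2 i hi).symm
  calc ∑ p : X k n, cnt A E p * cnt A E p
      = ∑ p : X k n, ∑ x ∈ A, ∑ x' ∈ A, if Agr E x p ∧ Agr E x' p then 1 else 0 := by
        refine Finset.sum_congr rfl fun p _ => ?_
        rw [cnt_eq_sum, Finset.sum_mul_sum]
        refine Finset.sum_congr rfl fun x _ => Finset.sum_congr rfl fun x' _ => ?_
        by_cases h1 : Agr E x p <;> by_cases h2 : Agr E x' p <;> simp [h1, h2]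
    _ = ∑ x ∈ A, ∑ x' ∈ A, ∑ p : X k n, if Agr E x p ∧ Agr E x' p then 1 else 0 := by
        rw [Finset.sum_comm]
        refine Finset.sum_congr rfl fun x _ => Finset.sum_comm
    _ = ∑ x ∈ A, ∑ x' ∈ A, if Agr E x x' then k ^ (n - E.card) else 0 := by
        exact Finset.sum_congr rfl fun x _ => Finset.sum_congr rfl fun x' _ => key x x'
    _ = ∑ x ∈ A, k ^ (n - E.card) * cnt A E x := by
        refine Finset.sum_congr rfl fun x _ => ?_
        rw [← Finset.sum_filter, Finset.sum_const, smul_eq_mul, card_filter_agr, mul_comm]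
    _ = k ^ (n - E.card) * ∑ p ∈ A, cnt A E p := by rw [Finset.mul_sum]


/-- Bessel-type inequality for disjoint coordinate blocks. -/
lemma bessel (hk : 0 < k) {τ : ℕ} (hτ : 0 < τ) (A : Finset (X k n)) (S : Finset ℕ)
    (hS : ∀ l ∈ S, l + τ ≤ n)
    (hd : ∀ l ∈ S, ∀ l' ∈ S, l ≠ l' →
      Disjoint (Finset.Ico l (l + τ)) (Finset.Ico l' (l' + τ))) :
    ∑ l ∈ S, ∑ p : X k n, ((cnt A (Finset.Ico l (l + τ)) p : ℝ) * (k : ℝ) ^ τ - (A.card : ℝ)) ^ 2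
      ≤ (k : ℝ) ^ n * (k : ℝ) ^ n * A.card := by
  classical
  set kR : ℝ := (k : ℝ) with hkR
  have hkR0 : (0 : ℝ) < kR := by rw [hkR]; exact_mod_cast hk
  set a : ℝ := (A.card : ℝ) with ha
  set K : ℝ := kR ^ n with hK
  set B : ℕ → Finset ℕ := fun l => Finset.Ico l (l + τ) with hB
  set e : ℕ → X k n → ℝ := fun l p => (cnt A (B l) p : ℝ) * kR ^ τ - a with he
  have hBcard : ∀ l, (B l).card = τ := fun l => by simp [hB]
  have hBlt : ∀ l ∈ S, ∀ i ∈ B l, i < n := by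
    intro l hl i hi
    simp only [hB, Finset.mem_Ico] at hi
    have := hS l hl
    omega
  have hcardX : ((Fintype.card (X k n) : ℕ) : ℝ) = K := by
    rw [Fintype.card_fun, Fintype.card_fin, Fintype.card_fin]
    push_cast
    rw [hK, hkR]
  have s0 : ∀ l ∈ S, ∑ p : X k n, (cnt A (B l) p : ℝ) = a * kR ^ (n - τ) := by
    intro l hl
    have h := sum_cnt hk (hBlt l hl) A
    rw [hBcard] at h
    rw [ha, hkR]
    exact_mod_cast h
  have s0A : ∀ l ∈ S, ∑ p : X k n, e l p = 0 := by
    intro l hl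
    have hτn : τ ≤ n := le_trans (Nat.le_add_left _ _) (hS l hl)
    have hpow : kR ^ (n - τ) * kR ^ τ = K := by
      rw [← pow_add, hK]; congr 1; omega
    simp only [he]
    rw [Finset.sum_sub_distrib, ← Finset.sum_mul, s0 l hl, Finset.sum_const,
      Finset.card_univ, nsmul_eq_mul, hcardX]
    linear_combination a * hpow
  have s1 : ∀ l ∈ S, ∑ p : X k n, (cnt A (B l) p : ℝ) * (cnt A (B l) p : ℝ)
      = kR ^ (n - τ) * ∑ p ∈ A, (cnt A (B l) p : ℝ) := by
    intro l hl
    have h := sum_cnt_sq hk (hBlt l hl) A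
    rw [hBcard] at h
    rw [hkR]
    exact_mod_cast h
  have s2 : ∀ l ∈ S, ∀ l' ∈ S, l ≠ l' →
      ∑ p : X k n, (cnt A (B l) p : ℝ) * (cnt A (B l') p : ℝ)
        = a * a * kR ^ (n - τ - τ) := by
    intro l hl l' hl' hne
    have h := sum_cnt_mul_cnt hk (hBlt l hl) (hBlt l' hl') (hd l hl l' hl' hne) A A
    rw [hBcard, hBcard] at h
    have : ((A.card * A.card * k ^ (n - τ - τ) : ℕ) : ℝ) = a * a * kR ^ (n - τ - τ) := by
      push_cast; rw [ha, hkR]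
    rw [← this]
    exact_mod_cast h
  have scross : ∀ l ∈ S, ∀ l' ∈ S, l ≠ l' → ∑ p : X k n, e l p * e l' p = 0 := by
    intro l hl l' hl' hne
    have h2 : τ + τ ≤ n := by
      have hsub : B l ∪ B l' ⊆ Finset.range n := by
        intro i hi
        rcases Finset.mem_union.1 hi with h | h
        · exact Finset.mem_range.2 (hBlt l hl i h)
        · exact Finset.mem_range.2 (hBlt l' hl' i h)
      have hc := Finset.card_le_card hsub
      rw [Finset.card_union_of_disjoint (hd l hl l' hl' hne), hBcard, hBcard,
        Finset.card_range] at hc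
      exact hc
    have hτn : τ ≤ n := by omega
    have hpX : kR ^ (n - τ - τ) * (kR ^ τ * kR ^ τ) = K := by
      rw [← pow_add, ← pow_add, hK]; congr 1; omega
    have hpY : kR ^ (n - τ) * kR ^ τ = K := by
      rw [← pow_add, hK]; congr 1; omega
    have expand : ∀ p : X k n, e l p * e l' p
        = (cnt A (B l) p : ℝ) * (cnt A (B l') p : ℝ) * (kR ^ τ * kR ^ τ)
          - (cnt A (B l) p : ℝ) * (kR ^ τ * a)
          - (cnt A (B l') p : ℝ) * (kR ^ τ * a) + a * a := by
      intro p; simp only [he]; ring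
    simp only [expand]
    rw [Finset.sum_add_distrib, Finset.sum_sub_distrib, Finset.sum_sub_distrib,
      ← Finset.sum_mul, ← Finset.sum_mul, ← Finset.sum_mul,
      s0 l hl, s0 l' hl', s2 l hl l' hl' hne, Finset.sum_const,
      Finset.card_univ, nsmul_eq_mul, hcardX]
    linear_combination (a * a) * hpX - (a * a + a * a) * hpY
  set g : X k n → ℝ := fun p => (if p ∈ A then K else 0) - a with hg
  have sdot : ∀ l ∈ S, ∑ p : X k n, g p * e l p = ∑ p : X k n, (e l p) ^ 2 := by
    intro l hl
    have hτn : τ ≤ n := le_trans (Nat.le_add_left _ _) (hS l hl)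
    have hpY : kR ^ (n - τ) * kR ^ τ = K := by
      rw [← pow_add, hK]; congr 1; omega
    have hL : ∑ p : X k n, g p * e l p = K * ∑ p ∈ A, e l p := by
      have : ∀ p : X k n, g p * e l p = (if p ∈ A then K * e l p else 0) - a * e l p := by
        intro p; simp only [hg]; split <;> ring
      simp only [this]
      rw [Finset.sum_sub_distrib, ← Finset.mul_sum, Finset.sum_ite_mem,
        Finset.univ_inter, ← Finset.mul_sum, s0A l hl, mul_zero, sub_zero]
    rw [hL]
    have hsq : ∀ p : X k n, (e l p) ^ 2
        = (cnt A (B l) p : ℝ) * (cnt A (B l) p : ℝ) * (kR ^ τ * kR ^ τ)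
          - (cnt A (B l) p : ℝ) * (2 * kR ^ τ * a) + a * a := by
      intro p; simp only [he]; ring
    have hA : ∑ p ∈ A, e l p = kR ^ τ * ∑ p ∈ A, (cnt A (B l) p : ℝ) - a * a := by
      simp only [he]
      rw [Finset.sum_sub_distrib, ← Finset.sum_mul, Finset.sum_const, nsmul_eq_mul, ← ha]
      ring
    have hR : ∑ p : X k n, (e l p) ^ 2
        = (∑ p : X k n, (cnt A (B l) p : ℝ) * (cnt A (B l) p : ℝ)) * (kR ^ τ * kR ^ τ)
          - (∑ p : X k n, (cnt A (B l) p : ℝ)) * (2 * kR ^ τ * a) + K * (a * a) := by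
      simp only [hsq]
      rw [Finset.sum_add_distrib, Finset.sum_sub_distrib, ← Finset.sum_mul, ← Finset.sum_mul,
        Finset.sum_const, Finset.card_univ, nsmul_eq_mul, hcardX]
    rw [hA, hR, s1 l hl, s0 l hl]
    linear_combination (2 * (a * a) - kR ^ τ * ∑ p ∈ A, (cnt A (B l) p : ℝ)) * hpY
  -- the expansion of the square
  have nonneg : (0 : ℝ) ≤ ∑ p : X k n, (g p - ∑ l ∈ S, e l p) ^ 2 :=
    Finset.sum_nonneg fun p _ => sq_nonneg _
  have expand2 : ∑ p : X k n, (g p - ∑ l ∈ S, e l p) ^ 2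
      = ∑ p : X k n, (g p) ^ 2 - 2 * ∑ l ∈ S, ∑ p : X k n, g p * e l p
        + ∑ l ∈ S, ∑ l' ∈ S, ∑ p : X k n, e l p * e l' p := by
    have hpt : ∀ p : X k n, (g p - ∑ l ∈ S, e l p) ^ 2
        = (g p) ^ 2 - 2 * ∑ l ∈ S, g p * e l p
          + ∑ l ∈ S, ∑ l' ∈ S, e l p * e l' p := by
      intro p
      rw [← Finset.mul_sum, ← Finset.sum_mul_sum]
      ring
    simp only [hpt]
    rw [Finset.sum_add_distrib, Finset.sum_sub_distrib]
    congr 1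
    · congr 1
      rw [← Finset.mul_sum, Finset.sum_comm]
    · rw [Finset.sum_comm]
      refine Finset.sum_congr rfl fun l _ => Finset.sum_comm
  have diag : ∑ l ∈ S, ∑ l' ∈ S, ∑ p : X k n, e l p * e l' p
      = ∑ l ∈ S, ∑ p : X k n, (e l p) ^ 2 := by
    refine Finset.sum_congr rfl fun l hl => ?_
    rw [Finset.sum_eq_single_of_mem l hl]
    · refine Finset.sum_congr rfl fun p _ => (sq (e l p)).symm ▸ by ring
    · intro l' hl' hne
      exact scross l hl l' hl' (fun h => hne h.symm)
  have sdots : ∑ l ∈ S, ∑ p : X k n, g p * e l p = ∑ l ∈ S, ∑ p : X k n, (e l p) ^ 2 :=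
    Finset.sum_congr rfl sdot
  have gsq : ∑ p : X k n, (g p) ^ 2 = a * (K * K) - a * a * K := by
    have : ∀ p : X k n, (g p) ^ 2 = (if p ∈ A then K * K - 2 * K * a else 0) + a * a := by
      intro p; simp only [hg]; split <;> ring
    simp only [this]
    rw [Finset.sum_add_distrib, Finset.sum_ite_mem, Finset.univ_inter, Finset.sum_const,
      Finset.sum_const, Finset.card_univ, nsmul_eq_mul, nsmul_eq_mul, hcardX, ← ha]
    ring
  have main : ∑ l ∈ S, ∑ p : X k n, (e l p) ^ 2 ≤ a * (K * K) - a * a * K := by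
    rw [expand2, sdots, diag] at nonneg
    linarith [gsq]
  have ha0 : 0 ≤ a := by rw [ha]; positivity
  have hK0 : 0 ≤ K := by rw [hK]; positivity
  calc ∑ l ∈ S, ∑ p : X k n, (e l p) ^ 2 ≤ a * (K * K) - a * a * K := main
    _ ≤ K * K * a := by nlinarith


lemma cnt_congr {A : Finset (X k n)} {E : Finset ℕ} {p q : X k n} (h : Agr E p q) :
    cnt A E p = cnt A E q := by
  unfold cnt
  congr 1
  apply Finset.filter_congr
  intro x _
  constructor <;> intro hx i hi
  · rw [hx i hi]; exact h i hi
  · rw [hx i hi]; exact (h i hi).symm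

lemma Agr.mono {E F : Finset ℕ} {x p : X k n} (hEF : E ⊆ F) (h : Agr F x p) : Agr E x p :=
  fun i hi => h i (hEF hi)

lemma cnt_section (A' : Finset (X k n)) (D E : Finset ℕ) (q : X k n) :
    cnt (A'.filter fun x => Agr D x q) E q = cnt A' (D ∪ E) q := by
  unfold cnt
  rw [Finset.filter_filter]
  congr 1
  apply Finset.filter_congr
  intro x _
  constructor
  · rintro ⟨h1, h2⟩ i hi
    rcases Finset.mem_union.1 hi with h | h
    exacts [h1 i h, h2 i h]
  · intro h
    exact ⟨fun i hi => h i (Finset.mem_union_left _ hi), fun i hi => h i (Finset.mem_union_right _ hi)⟩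

set_option maxHeartbeats 1000000 in
open scoped Classical in
/-- The core lemma: few blocks are bad for a given conditioning set `D`. -/
lemma core (hk : 0 < k) {τ : ℕ} (hτ : 0 < τ) (A' : Finset (X k n)) (D : Finset ℕ)
    (hD : ∀ i ∈ D, i < n) (S : Finset ℕ) (hS : ∀ l ∈ S, l + τ ≤ n)
    (hdS : ∀ l ∈ S, ∀ l' ∈ S, l ≠ l' →
      Disjoint (Finset.Ico l (l + τ)) (Finset.Ico l' (l' + τ)))
    (hDd : ∀ l ∈ S, Disjoint (Finset.Ico l (l + τ)) D)
    (δ : ℝ) (hδ : 0 < δ) :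
    ((S.filter (fun l => ∃ p : X k n,
        δ < |(cnt A' (D ∪ Finset.Ico l (l + τ)) p : ℝ) / (k : ℝ) ^ (n - D.card - τ)
          - (cnt A' D p : ℝ) / (k : ℝ) ^ (n - D.card)|)).card : ℝ) * δ ^ 2
      ≤ (k : ℝ) ^ (2 * D.card + 2 * τ) := by
  set kR : ℝ := (k : ℝ) with hkR
  have hkR0 : (0 : ℝ) < kR := by rw [hkR]; exact_mod_cast hk
  set bad : ℕ → Prop := fun l => ∃ p : X k n,
      δ < |(cnt A' (D ∪ Finset.Ico l (l + τ)) p : ℝ) / kR ^ (n - D.card - τ)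
          - (cnt A' D p : ℝ) / kR ^ (n - D.card)| with hbad
  set T := S.filter bad with hT
  rcases T.eq_empty_or_nonempty with hTe | hTne
  · rw [hTe]
    simp only [Finset.card_empty, Nat.cast_zero, zero_mul]
    positivity
  -- from a bad element, D ∪ block fits in range n, so D.card + τ ≤ n
  obtain ⟨l₀, hl₀⟩ := hTne
  have hl₀S : l₀ ∈ S := (Finset.mem_filter.1 hl₀).1
  have hdcn : D.card + τ ≤ n := by
    have hsub : D ∪ Finset.Ico l₀ (l₀ + τ) ⊆ Finset.range n := by
      intro i hi
      rcases Finset.mem_union.1 hi with h | h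
      · exact Finset.mem_range.2 (hD i h)
      · rw [Finset.mem_Ico] at h
        have := hS l₀ hl₀S
        exact Finset.mem_range.2 (by omega)
    have hc := Finset.card_le_card hsub
    rw [Finset.card_union_of_disjoint (hDd l₀ hl₀S).symm, Finset.card_range,
      Nat.card_Ico] at hc
    omega
  set dc := D.card with hdc
  -- witness predicate
  set wtn : X k n → ℕ → Prop := fun q l =>
      δ < |(cnt A' (D ∪ Finset.Ico l (l + τ)) q : ℝ) / kR ^ (n - dc - τ)
          - (cnt A' D q : ℝ) / kR ^ (n - dc)| with hwtn
  -- lower bound on witnesses for each bad l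
  have lower : ∀ l ∈ T, (kR ^ (n - dc - τ)) ≤ ((univ.filter fun q : X k n => wtn q l).card : ℝ) := by
    intro l hl
    obtain ⟨hlS, p, hp⟩ := Finset.mem_filter.1 hl
    have hcl : ∀ q : X k n, Agr (D ∪ Finset.Ico l (l + τ)) q p → wtn q l := by
      intro q hq
      have h1 : cnt A' (D ∪ Finset.Ico l (l + τ)) q = cnt A' (D ∪ Finset.Ico l (l + τ)) p :=
        cnt_congr hq
      have h2 : cnt A' D q = cnt A' D p :=
        cnt_congr (hq.mono Finset.subset_union_left)
      simp only [hwtn]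
      rw [h1, h2]
      exact hp
    have hsub2 : (univ.filter fun q : X k n => Agr (D ∪ Finset.Ico l (l + τ)) q p)
        ⊆ (univ.filter fun q : X k n => wtn q l) := by
      intro q hq
      simp only [Finset.mem_filter, Finset.mem_univ, true_and] at hq ⊢
      exact hcl q hq
    have hclcard : (univ.filter fun q : X k n => Agr (D ∪ Finset.Ico l (l + τ)) q p).card
        = k ^ (n - dc - τ) := by
      have hrfl : (univ.filter fun q : X k n => Agr (D ∪ Finset.Ico l (l + τ)) q p).card
          = cnt univ (D ∪ Finset.Ico l (l + τ)) p := rfl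
      rw [hrfl, cnt_univ hk _ (by
        intro i hi
        rcases Finset.mem_union.1 hi with h | h
        · exact hD i h
        · rw [Finset.mem_Ico] at h
          have := hS l hlS
          omega) p,
        Finset.card_union_of_disjoint (hDd l hlS).symm, Nat.card_Ico, Nat.sub_sub, hdc]
      congr 1
      omega
    have := Finset.card_le_card hsub2
    rw [hclcard] at this
    calc kR ^ (n - dc - τ) = ((k ^ (n - dc - τ) : ℕ) : ℝ) := by push_cast; rw [hkR]
      _ ≤ _ := by exact_mod_cast this
  -- upper bound: for each q, few l are witnessed, via bessel on the section at q
  have upper : ∀ q : X k n,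
      ((S.filter fun l => wtn q l).card : ℝ) * (kR ^ (n - τ) * δ ^ 2 * (kR ^ (n - dc))^2)
        ≤ kR ^ (2 * n) * (cnt A' D q : ℝ) := by
    intro q
    set Aq := A'.filter fun x => Agr D x q with hAq
    have hAqcard : (Aq.card : ℝ) = (cnt A' D q : ℝ) := by rw [hAq, cnt]
    have hbes := bessel hk hτ Aq S hS hdS
    -- each witnessed l contributes at least kR^(n-τ) * (δ * kR^(n-dc))^2
    have hcontrib : ∀ l ∈ S, wtn q l →
        kR ^ (n - τ) * δ ^ 2 * (kR ^ (n - dc))^2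
          ≤ ∑ x : X k n, ((cnt Aq (Finset.Ico l (l + τ)) x : ℝ) * kR ^ τ - (Aq.card : ℝ)) ^ 2 := by
      intro l hlS hw
      -- |e_l q| > δ * kR^(n - dc)
      have hq1 : (cnt Aq (Finset.Ico l (l + τ)) q : ℝ) = (cnt A' (D ∪ Finset.Ico l (l + τ)) q : ℝ) := by
        rw [hAq]; exact Nat.cast_inj.2 (cnt_section A' D (Finset.Ico l (l + τ)) q)
      have hpow : kR ^ (n - dc - τ) * kR ^ τ = kR ^ (n - dc) := by
        rw [← pow_add]; congr 1; omega
      have hel : δ * kR ^ (n - dc)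
          < |(cnt Aq (Finset.Ico l (l + τ)) q : ℝ) * kR ^ τ - (Aq.card : ℝ)| := by
        simp only [hwtn] at hw
        rw [hq1, hAqcard]
        have hp1 : (0:ℝ) < kR ^ (n - dc - τ) := by positivity
        have hp2 : (0:ℝ) < kR ^ (n - dc) := by positivity
        calc δ * kR ^ (n - dc)
            < |(cnt A' (D ∪ Finset.Ico l (l + τ)) q : ℝ) / kR ^ (n - dc - τ)
              - (cnt A' D q : ℝ) / kR ^ (n - dc)| * kR ^ (n - dc) := by
              exact mul_lt_mul_of_pos_right hw hp2
          _ = |(cnt A' (D ∪ Finset.Ico l (l + τ)) q : ℝ) * kR ^ τ - (cnt A' D q : ℝ)| := by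
              have e1 : (cnt A' (D ∪ Finset.Ico l (l + τ)) q : ℝ) / kR ^ (n - dc - τ)
                  = ((cnt A' (D ∪ Finset.Ico l (l + τ)) q : ℝ) * kR ^ τ) / kR ^ (n - dc) := by
                rw [div_eq_div_iff (ne_of_gt hp1) (ne_of_gt hp2)]
                linear_combination (-(cnt A' (D ∪ Finset.Ico l (l + τ)) q : ℝ)) * hpow
              rw [e1, div_sub_div_same, abs_div, abs_of_pos hp2,
                div_mul_cancel₀ _ (ne_of_gt hp2)]
      -- e_l is constant on the block-class of q
      have hconst : ∀ x : X k n, Agr (Finset.Ico l (l + τ)) x q →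
          cnt Aq (Finset.Ico l (l + τ)) x = cnt Aq (Finset.Ico l (l + τ)) q :=
        fun x hx => cnt_congr hx
      have hclass : (univ.filter fun x : X k n => Agr (Finset.Ico l (l + τ)) x q).card
          = k ^ (n - τ) := by
        have hrfl : (univ.filter fun x : X k n => Agr (Finset.Ico l (l + τ)) x q).card
            = cnt univ (Finset.Ico l (l + τ)) q := rfl
        rw [hrfl, cnt_univ hk _ (by
          intro i hi
          rw [Finset.mem_Ico] at hi
          have := hS l hlS
          omega) q]
        rw [Nat.card_Ico]
        congr 1
        omega
      calc kR ^ (n - τ) * δ ^ 2 * (kR ^ (n - dc))^2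
          = ((k ^ (n - τ) : ℕ) : ℝ) * (δ * kR ^ (n - dc))^2 := by push_cast; rw [hkR]; ring
        _ ≤ ((univ.filter fun x : X k n => Agr (Finset.Ico l (l + τ)) x q).card : ℝ)
            * ((cnt Aq (Finset.Ico l (l + τ)) q : ℝ) * kR ^ τ - (Aq.card : ℝ)) ^ 2 := by
            rw [hclass]
            have h1 : (δ * kR ^ (n - dc))^2
                ≤ ((cnt Aq (Finset.Ico l (l + τ)) q : ℝ) * kR ^ τ - (Aq.card : ℝ)) ^ 2 := by
              rw [← sq_abs ((cnt Aq (Finset.Ico l (l + τ)) q : ℝ) * kR ^ τ - (Aq.card : ℝ))]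
              apply pow_le_pow_left₀ (by positivity) (le_of_lt hel)
            exact mul_le_mul_of_nonneg_left h1 (by positivity)
        _ = ∑ x ∈ univ.filter (fun x : X k n => Agr (Finset.Ico l (l + τ)) x q),
              ((cnt Aq (Finset.Ico l (l + τ)) x : ℝ) * kR ^ τ - (Aq.card : ℝ)) ^ 2 := by
            rw [Finset.sum_congr rfl (fun x hx => by
              rw [hconst x (Finset.mem_filter.1 hx).2]), Finset.sum_const, nsmul_eq_mul]
        _ ≤ ∑ x : X k n, ((cnt Aq (Finset.Ico l (l + τ)) x : ℝ) * kR ^ τ - (Aq.card : ℝ)) ^ 2 := by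
            apply Finset.sum_le_sum_of_subset_of_nonneg (Finset.filter_subset _ _)
            intro x _ _
            positivity
    calc ((S.filter fun l => wtn q l).card : ℝ) * (kR ^ (n - τ) * δ ^ 2 * (kR ^ (n - dc))^2)
        = ∑ _l ∈ S.filter (fun l => wtn q l), kR ^ (n - τ) * δ ^ 2 * (kR ^ (n - dc))^2 := by
          rw [Finset.sum_const, nsmul_eq_mul]
      _ ≤ ∑ l ∈ S.filter (fun l => wtn q l),
            ∑ x : X k n, ((cnt Aq (Finset.Ico l (l + τ)) x : ℝ) * kR ^ τ - (Aq.card : ℝ)) ^ 2 := by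
          apply Finset.sum_le_sum
          intro l hl
          obtain ⟨hlS, hw⟩ := Finset.mem_filter.1 hl
          exact hcontrib l hlS hw
      _ ≤ ∑ l ∈ S,
            ∑ x : X k n, ((cnt Aq (Finset.Ico l (l + τ)) x : ℝ) * kR ^ τ - (Aq.card : ℝ)) ^ 2 := by
          apply Finset.sum_le_sum_of_subset_of_nonneg (Finset.filter_subset _ _)
          intro l _ _
          positivity
      _ ≤ kR ^ n * kR ^ n * (Aq.card : ℝ) := hbes
      _ = kR ^ (2 * n) * (cnt A' D q : ℝ) := by
          rw [hAqcard, ← pow_add]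
          ring_nf
  -- combine: sum over q
  have hWl : (T.card : ℝ) * kR ^ (n - dc - τ)
      ≤ ∑ q : X k n, ((S.filter fun l => wtn q l).card : ℝ) := by
    have hswap : ∑ q : X k n, ((S.filter fun l => wtn q l).card : ℝ)
        = ∑ l ∈ S, ((univ.filter fun q : X k n => wtn q l).card : ℝ) := by
      simp only [Finset.card_filter]
      push_cast
      rw [Finset.sum_comm]
    rw [hswap]
    calc (T.card : ℝ) * kR ^ (n - dc - τ) = ∑ _l ∈ T, kR ^ (n - dc - τ) := by
          rw [Finset.sum_const, nsmul_eq_mul]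
      _ ≤ ∑ l ∈ T, ((univ.filter fun q : X k n => wtn q l).card : ℝ) :=
          Finset.sum_le_sum lower
      _ ≤ ∑ l ∈ S, ((univ.filter fun q : X k n => wtn q l).card : ℝ) := by
          apply Finset.sum_le_sum_of_subset_of_nonneg (Finset.filter_subset _ _)
          intro l _ _
          positivity
  have hWu : (∑ q : X k n, ((S.filter fun l => wtn q l).card : ℝ))
        * (kR ^ (n - τ) * δ ^ 2 * (kR ^ (n - dc))^2)
      ≤ kR ^ (2 * n) * kR ^ n * kR ^ (n - dc) := by
    calc (∑ q : X k n, ((S.filter fun l => wtn q l).card : ℝ))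
          * (kR ^ (n - τ) * δ ^ 2 * (kR ^ (n - dc))^2)
        = ∑ q : X k n, ((S.filter fun l => wtn q l).card : ℝ)
            * (kR ^ (n - τ) * δ ^ 2 * (kR ^ (n - dc))^2) := by rw [Finset.sum_mul]
      _ ≤ ∑ q : X k n, kR ^ (2 * n) * (cnt A' D q : ℝ) :=
          Finset.sum_le_sum fun q _ => upper q
      _ = kR ^ (2 * n) * ((A'.card : ℝ) * kR ^ (n - dc)) := by
          rw [← Finset.mul_sum]
          congr 1
          have h := sum_cnt hk hD A'
          rw [hkR]
          exact_mod_cast h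
      _ ≤ kR ^ (2 * n) * (kR ^ n * kR ^ (n - dc)) := by
          apply mul_le_mul_of_nonneg_left _ (by positivity)
          apply mul_le_mul_of_nonneg_right _ (by positivity)
          calc (A'.card : ℝ) ≤ ((Fintype.card (X k n) : ℕ) : ℝ) := by
                exact_mod_cast Finset.card_le_card (Finset.subset_univ A')
            _ = kR ^ n := by
                rw [Fintype.card_fun, Fintype.card_fin, Fintype.card_fin]
                push_cast
                rw [hkR]
      _ = kR ^ (2 * n) * kR ^ n * kR ^ (n - dc) := by ring
  -- final exponent arithmetic
  have hkey : (T.card : ℝ) * kR ^ (n - dc - τ) * (kR ^ (n - τ) * δ ^ 2 * (kR ^ (n - dc))^2)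
      ≤ kR ^ (2 * n) * kR ^ n * kR ^ (n - dc) := by
    refine le_trans (mul_le_mul_of_nonneg_right hWl (by positivity)) hWu
  have hP : (0:ℝ) < kR ^ (n - dc - τ) * kR ^ (n - τ) * (kR ^ (n - dc))^2 := by positivity
  rw [← mul_le_mul_iff_of_pos_right hP]
  calc (T.card : ℝ) * δ ^ 2 * (kR ^ (n - dc - τ) * kR ^ (n - τ) * (kR ^ (n - dc))^2)
      = (T.card : ℝ) * kR ^ (n - dc - τ) * (kR ^ (n - τ) * δ ^ 2 * (kR ^ (n - dc))^2) := by ring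
    _ ≤ kR ^ (2 * n) * kR ^ n * kR ^ (n - dc) := hkey
    _ = kR ^ (2 * dc + 2 * τ) * (kR ^ (n - dc - τ) * kR ^ (n - τ) * (kR ^ (n - dc))^2) := by
        rw [← pow_mul, ← pow_add, ← pow_add, ← pow_add, ← pow_add, ← pow_add]
        congr 1
        omega


open scoped Classical in
noncomputable def Afin (k n : ℕ) (A : Set (Word k)) : Finset (X k n) :=
  Finset.univ.filter (fun v => List.ofFn v ∈ A)

lemma tauExt_lt {τ n : ℕ} {I : Finset ℕ} (h : ∀ j ∈ I, j + τ ≤ n) :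
    ∀ i ∈ tauExt τ I, i < n := by
  intro i hi
  rw [tauExt, Finset.mem_biUnion] at hi
  obtain ⟨j, hj, hij⟩ := hi
  rw [Finset.mem_Ico] at hij
  have := h j hj
  omega

lemma tauExt_empty (τ : ℕ) : tauExt τ (∅ : Finset ℕ) = ∅ := by
  simp [tauExt]

lemma tauExt_insert (τ m : ℕ) (I : Finset ℕ) :
    tauExt τ (insert m I) = Finset.Ico m (m + τ) ∪ tauExt τ I := by
  rw [tauExt, tauExt, Finset.biUnion_insert]

lemma secDensτ_empty (k n τ : ℕ) (y : ℕ → Fin k) (A : Set (Word k)) :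
    secDensτ k n τ ∅ y A = _root_.dens k n A := by
  unfold secDensτ _root_.dens
  rw [tauExt_empty]
  have hset : {x ∈ A | x.length = n ∧ ∀ i ∈ (∅ : Finset ℕ), x[i]? = some (y i)}
      = {x ∈ A | x.length = n} := by
    ext z; simp
  rw [hset]
  simp

open scoped Classical in
lemma translate {k n : ℕ} (hk : 0 < k) (τ : ℕ) (I : Finset ℕ)
    (hI : ∀ i ∈ tauExt τ I, i < n) (y : ℕ → Fin k) (A : Set (Word k)) :
    secDensτ k n τ I y A
      = (cnt (Afin k n A) (tauExt τ I) (fun j : Fin n => y j) : ℝ)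
          / (k : ℝ) ^ (n - (tauExt τ I).card) := by
  unfold secDensτ
  congr 2
  set E := tauExt τ I with hE
  set p : X k n := fun j : Fin n => y j with hp
  have hset : {x ∈ A | x.length = n ∧ ∀ i ∈ E, x[i]? = some (y i)}
      = ↑(((Afin k n A).filter (fun v => Agr E v p)).image List.ofFn) := by
    ext z
    simp only [Set.mem_setOf_eq, Finset.coe_image, Set.mem_image, Finset.mem_coe,
      Finset.mem_filter, Afin, Finset.mem_univ, true_and, Finset.mem_filter]
    constructor
    · rintro ⟨hzA, hlen, hcond⟩
      have hofn : List.ofFn (fun j : Fin n => z.get ⟨(j : ℕ), by omega⟩) = z := by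
        apply List.ext_get
        · simp [hlen]
        · intro i h1 h2
          simp [List.get_ofFn]
      refine ⟨fun j => z.get ⟨(j : ℕ), by omega⟩, ⟨?_, ?_⟩, hofn⟩
      · rw [hofn]; exact hzA
      · intro j hj
        have h1 := hcond (j : ℕ) hj
        have h2 : z[(j : ℕ)]? = some (z.get ⟨(j : ℕ), by omega⟩) := by
          rw [List.getElem?_eq_getElem (by omega)]; simp
        rw [h2] at h1
        exact Option.some.inj h1
    · rintro ⟨v, ⟨hvA, hvagr⟩, hofn⟩
      subst hofn
      refine ⟨hvA, by simp, ?_⟩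
      intro i hi
      have hin : i < n := hI i (hE ▸ hi)
      have h1 : (List.ofFn v)[i]? = some (v ⟨i, hin⟩) := by
        simp [List.getElem?_ofFn, hin]
      rw [h1]
      exact congrArg some (hvagr ⟨i, hin⟩ hi)
  rw [hset, Set.ncard_coe_finset, Finset.card_image_of_injective _ List.ofFn_injective]
  rfl


lemma cnt_empty {k n : ℕ} (A : Finset (X k n)) (p : X k n) : cnt A ∅ p = A.card := by
  unfold cnt
  rw [Finset.filter_true_of_mem]
  intro x _ i hi
  simp at hi

lemma Ico_disj {a b τ : ℕ} (h : a + τ ≤ b ∨ b + τ ≤ a) :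
    Disjoint (Finset.Ico a (a + τ)) (Finset.Ico b (b + τ)) := by
  rw [Finset.disjoint_left]
  intro x hx hx'
  rw [Finset.mem_Ico] at hx hx'
  omega

open scoped Classical in
/-- `l` is a bad candidate relative to the chosen set `L`. -/
def OBad (k τ : ℕ) (δ : ℝ) (F : Finset (Set (Word k))) (L : Finset ℕ) (l : ℕ) : Prop :=
  ∃ A ∈ F, ∃ n ∈ L, ∃ I ⊆ L.filter (· < n), ∃ y : ℕ → Fin k,
    δ < |secDensτ k n τ (insert l I) y A - secDensτ k n τ I y A|

/-- the inductive invariant. -/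
def PInv (k τ : ℕ) (δ : ℝ) (F : Finset (Set (Word k))) (L : Finset ℕ) : Prop :=
  ∀ A ∈ F, ∀ n ∈ L, ∀ I ⊆ L.filter (· < n), ∀ y : ℕ → Fin k,
    |secDensτ k n τ I y A - _root_.dens k n A| ≤ δ * I.card

open scoped Classical in
lemma badcount {k τ : ℕ} (hk : 0 < k) (hτ : 0 < τ) (δ : ℝ) (hδ : 0 < δ)
    (F : Finset (Set (Word k))) (L M : Finset ℕ)
    (hsp : Sparse τ (M ∪ L)) (hbelow : ∀ m ∈ M, ∀ x ∈ L, m < x) :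
    ((M.filter (OBad k τ δ F L)).card : ℝ) * δ ^ 2
      ≤ (F.card : ℝ) * L.card * 2 ^ L.card * (k : ℝ) ^ (2 * (τ * L.card) + 2 * τ) := by
  have hterm : ∀ A ∈ F, ∀ n ∈ L, ∀ I ∈ (L.filter (· < n)).powerset,
      ((M.filter (fun m => ∃ y : ℕ → Fin k,
        δ < |secDensτ k n τ (insert m I) y A - secDensτ k n τ I y A|)).card : ℝ) * δ ^ 2
        ≤ (k : ℝ) ^ (2 * (τ * L.card) + 2 * τ) := by
    intro A hA n hn I hIp
    have hI : I ⊆ L.filter (· < n) := Finset.mem_powerset.1 hIp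
    have hIL : ∀ j ∈ I, j ∈ L ∧ j < n := by
      intro j hj
      have := hI hj
      rw [Finset.mem_filter] at this
      exact this
    have hjτ : ∀ j ∈ I, j + τ ≤ n := fun j hj =>
      hsp j (Finset.mem_union_right _ (hIL j hj).1) n (Finset.mem_union_right _ hn)
        (hIL j hj).2
    have hjτ' : ∀ j ∈ insert n I, j + τ ≤ n ∨ j = n := by
      intro j hj
      rcases Finset.mem_insert.1 hj with rfl | hj
      · right; rfl
      · left; exact hjτ j hj
    have hDlt : ∀ i ∈ tauExt τ I, i < n := tauExt_lt hjτ
    have hMn : ∀ m ∈ M, m + τ ≤ n := fun m hm =>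
      hsp m (Finset.mem_union_left _ hm) n (Finset.mem_union_right _ hn) (hbelow m hm n hn)
    have hMdisj : ∀ m ∈ M, ∀ m' ∈ M, m ≠ m' →
        Disjoint (Finset.Ico m (m + τ)) (Finset.Ico m' (m' + τ)) := by
      intro m hm m' hm' hne
      apply Ico_disj
      rcases hne.lt_or_gt with h | h
      · left; exact hsp m (Finset.mem_union_left _ hm) m' (Finset.mem_union_left _ hm') h
      · right; exact hsp m' (Finset.mem_union_left _ hm') m (Finset.mem_union_left _ hm) h
    have hDdisj : ∀ m ∈ M, Disjoint (Finset.Ico m (m + τ)) (tauExt τ I) := by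
      intro m hm
      rw [tauExt, Finset.disjoint_biUnion_right]
      intro j hj
      apply Ico_disj
      left
      exact hsp m (Finset.mem_union_left _ hm) j (Finset.mem_union_right _ (hIL j hj).1)
        (hbelow m hm j (hIL j hj).1)
    -- relate outer badness to core badness
    have himp : ∀ m ∈ M, (∃ y : ℕ → Fin k,
        δ < |secDensτ k n τ (insert m I) y A - secDensτ k n τ I y A|) →
        (∃ p : X k n,
          δ < |(cnt (Afin k n A) (tauExt τ I ∪ Finset.Ico m (m + τ)) p : ℝ)
                / (k : ℝ) ^ (n - (tauExt τ I).card - τ)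
            - (cnt (Afin k n A) (tauExt τ I) p : ℝ) / (k : ℝ) ^ (n - (tauExt τ I).card)|) := by
      intro m hm hy0
      obtain ⟨y, hy⟩ := hy0
      refine ⟨fun j : Fin n => y j, ?_⟩
      have hins : tauExt τ (insert m I) = tauExt τ I ∪ Finset.Ico m (m + τ) := by
        rw [tauExt_insert, Finset.union_comm]
      have hinscard : (tauExt τ I ∪ Finset.Ico m (m + τ)).card
          = (tauExt τ I).card + τ := by
        rw [Finset.card_union_of_disjoint (hDdisj m hm).symm, Nat.card_Ico]
        omega
      have hlt2 : ∀ i ∈ tauExt τ (insert m I), i < n := by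
        apply tauExt_lt
        intro j hj
        rcases Finset.mem_insert.1 hj with h | hj
        · subst h; exact hMn _ hm
        · exact hjτ j hj
      have t1 := translate hk τ I hDlt y A
      have t2 := translate hk τ (insert m I) hlt2 y A
      rw [hins] at t2
      rw [t1, t2] at hy
      rw [hinscard] at hy
      rw [Nat.sub_sub]
      exact hy
    have hsubfilter : (M.filter (fun m => ∃ y : ℕ → Fin k,
        δ < |secDensτ k n τ (insert m I) y A - secDensτ k n τ I y A|))
        ⊆ (M.filter (fun m => ∃ p : X k n,
          δ < |(cnt (Afin k n A) (tauExt τ I ∪ Finset.Ico m (m + τ)) p : ℝ)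
                / (k : ℝ) ^ (n - (tauExt τ I).card - τ)
            - (cnt (Afin k n A) (tauExt τ I) p : ℝ) / (k : ℝ) ^ (n - (tauExt τ I).card)|)) := by
      intro m hm
      obtain ⟨hmM, hmb⟩ := Finset.mem_filter.1 hm
      exact Finset.mem_filter.2 ⟨hmM, himp m hmM hmb⟩
    have hcore := core hk hτ (Afin k n A) (tauExt τ I) hDlt M hMn hMdisj hDdisj δ hδ
    have hDcard : (tauExt τ I).card ≤ τ * L.card := by
      calc (tauExt τ I).card ≤ ∑ j ∈ I, (Finset.Ico j (j + τ)).card :=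
            Finset.card_biUnion_le
        _ = I.card * τ := by
            have hIco : ∀ j ∈ I, (Finset.Ico j (j + τ)).card = τ := fun j _ => by
              rw [Nat.card_Ico, Nat.add_sub_cancel_left]
            rw [Finset.sum_congr rfl hIco, Finset.sum_const, smul_eq_mul]
        _ ≤ τ * L.card := by
            have hILc : I.card ≤ L.card :=
              Finset.card_le_card (hI.trans (Finset.filter_subset _ _))
            calc I.card * τ = τ * I.card := Nat.mul_comm _ _
              _ ≤ τ * L.card := Nat.mul_le_mul_left τ hILc
    calc ((M.filter (fun m => ∃ y : ℕ → Fin k,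
          δ < |secDensτ k n τ (insert m I) y A - secDensτ k n τ I y A|)).card : ℝ) * δ ^ 2
        ≤ ((M.filter (fun m => ∃ p : X k n,
            δ < |(cnt (Afin k n A) (tauExt τ I ∪ Finset.Ico m (m + τ)) p : ℝ)
                  / (k : ℝ) ^ (n - (tauExt τ I).card - τ)
              - (cnt (Afin k n A) (tauExt τ I) p : ℝ)
                  / (k : ℝ) ^ (n - (tauExt τ I).card)|)).card : ℝ) * δ ^ 2 := by
          have := Finset.card_le_card hsubfilter
          apply mul_le_mul_of_nonneg_right _ (by positivity)
          exact_mod_cast this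
      _ ≤ (k : ℝ) ^ (2 * (tauExt τ I).card + 2 * τ) := hcore
      _ ≤ (k : ℝ) ^ (2 * (τ * L.card) + 2 * τ) := by
          apply pow_le_pow_right₀ (by exact_mod_cast hk)
          omega
  -- the union bound
  have hsub : M.filter (OBad k τ δ F L) ⊆ F.biUnion (fun A => L.biUnion (fun n =>
      ((L.filter (· < n)).powerset).biUnion (fun I => M.filter (fun m => ∃ y : ℕ → Fin k,
        δ < |secDensτ k n τ (insert m I) y A - secDensτ k n τ I y A|)))) := by
    intro m hm
    obtain ⟨hmM, A, hA, n, hn, I, hI, y, hy⟩ := Finset.mem_filter.1 hm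
    rw [Finset.mem_biUnion]
    refine ⟨A, hA, ?_⟩
    rw [Finset.mem_biUnion]
    refine ⟨n, hn, ?_⟩
    rw [Finset.mem_biUnion]
    exact ⟨I, Finset.mem_powerset.2 hI, Finset.mem_filter.2 ⟨hmM, y, hy⟩⟩
  have hcard : ((M.filter (OBad k τ δ F L)).card : ℝ)
      ≤ ∑ A ∈ F, ∑ n ∈ L, ∑ I ∈ (L.filter (· < n)).powerset,
          ((M.filter (fun m => ∃ y : ℕ → Fin k,
            δ < |secDensτ k n τ (insert m I) y A - secDensτ k n τ I y A|)).card : ℝ) := by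
    have h1 := Finset.card_le_card hsub
    have h2 := Finset.card_biUnion_le (s := F) (t := fun A => L.biUnion (fun n =>
      ((L.filter (· < n)).powerset).biUnion (fun I => M.filter (fun m => ∃ y : ℕ → Fin k,
        δ < |secDensτ k n τ (insert m I) y A - secDensτ k n τ I y A|))))
    have h3 : ∀ A ∈ F, (L.biUnion (fun n =>
        ((L.filter (· < n)).powerset).biUnion (fun I => M.filter (fun m => ∃ y : ℕ → Fin k,
          δ < |secDensτ k n τ (insert m I) y A - secDensτ k n τ I y A|)))).card
        ≤ ∑ n ∈ L, ∑ I ∈ (L.filter (· < n)).powerset,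
            (M.filter (fun m => ∃ y : ℕ → Fin k,
              δ < |secDensτ k n τ (insert m I) y A - secDensτ k n τ I y A|)).card := by
      intro A _
      refine le_trans Finset.card_biUnion_le (Finset.sum_le_sum fun n _ => ?_)
      exact Finset.card_biUnion_le
    have h4 : (M.filter (OBad k τ δ F L)).card
        ≤ ∑ A ∈ F, ∑ n ∈ L, ∑ I ∈ (L.filter (· < n)).powerset,
            (M.filter (fun m => ∃ y : ℕ → Fin k,
              δ < |secDensτ k n τ (insert m I) y A - secDensτ k n τ I y A|)).card :=
      le_trans h1 (le_trans h2 (Finset.sum_le_sum h3))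
    exact_mod_cast h4
  calc ((M.filter (OBad k τ δ F L)).card : ℝ) * δ ^ 2
      ≤ (∑ A ∈ F, ∑ n ∈ L, ∑ I ∈ (L.filter (· < n)).powerset,
          ((M.filter (fun m => ∃ y : ℕ → Fin k,
            δ < |secDensτ k n τ (insert m I) y A - secDensτ k n τ I y A|)).card : ℝ)) * δ ^ 2 :=
        mul_le_mul_of_nonneg_right hcard (by positivity)
    _ = ∑ A ∈ F, ∑ n ∈ L, ∑ I ∈ (L.filter (· < n)).powerset,
          ((M.filter (fun m => ∃ y : ℕ → Fin k,
            δ < |secDensτ k n τ (insert m I) y A - secDensτ k n τ I y A|)).card : ℝ) * δ ^ 2 := by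
        rw [Finset.sum_mul]
        refine Finset.sum_congr rfl fun A _ => ?_
        rw [Finset.sum_mul]
        refine Finset.sum_congr rfl fun n _ => ?_
        rw [Finset.sum_mul]
    _ ≤ ∑ A ∈ F, ∑ n ∈ L, ∑ _I ∈ (L.filter (· < n)).powerset,
          (k : ℝ) ^ (2 * (τ * L.card) + 2 * τ) := by
        refine Finset.sum_le_sum fun A hA => Finset.sum_le_sum fun n hn =>
          Finset.sum_le_sum fun I hIp => hterm A hA n hn I hIp
    _ ≤ (F.card : ℝ) * L.card * 2 ^ L.card * (k : ℝ) ^ (2 * (τ * L.card) + 2 * τ) := by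
        have hpows : ∀ n : ℕ, ((L.filter (· < n)).powerset.card : ℝ) ≤ 2 ^ L.card := by
          intro n
          rw [Finset.card_powerset]
          have h1 : (L.filter (· < n)).card ≤ L.card :=
            Finset.card_le_card (Finset.filter_subset _ _)
          calc ((2 ^ (L.filter (· < n)).card : ℕ) : ℝ) = 2 ^ (L.filter (· < n)).card := by
                push_cast; ring
            _ ≤ 2 ^ L.card := by
                apply pow_le_pow_right₀ one_le_two h1
        calc ∑ A ∈ F, ∑ n ∈ L, ∑ _I ∈ (L.filter (· < n)).powerset,
              (k : ℝ) ^ (2 * (τ * L.card) + 2 * τ)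
            = ∑ A ∈ F, ∑ n ∈ L, ((L.filter (· < n)).powerset.card : ℝ)
                * (k : ℝ) ^ (2 * (τ * L.card) + 2 * τ) := by
              refine Finset.sum_congr rfl fun A _ => Finset.sum_congr rfl fun n _ => ?_
              rw [Finset.sum_const, nsmul_eq_mul]
          _ ≤ ∑ A ∈ F, ∑ n ∈ L, (2 : ℝ) ^ L.card * (k : ℝ) ^ (2 * (τ * L.card) + 2 * τ) := by
              refine Finset.sum_le_sum fun A _ => Finset.sum_le_sum fun n _ => ?_
              exact mul_le_mul_of_nonneg_right (hpows n) (by positivity)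
          _ = (F.card : ℝ) * L.card * 2 ^ L.card * (k : ℝ) ^ (2 * (τ * L.card) + 2 * τ) := by
              rw [Finset.sum_const, Finset.sum_const, nsmul_eq_mul, nsmul_eq_mul]
              ring

lemma step {k τ : ℕ} (δ : ℝ) (hδ : 0 ≤ δ) (F : Finset (Set (Word k))) (L : Finset ℕ)
    (l : ℕ) (hmin : ∀ x ∈ L, l < x) (hP : PInv k τ δ F L)
    (hgood : ¬ OBad k τ δ F L l) : PInv k τ δ F (insert l L) := by
  intro A hA n hn I hI y
  rcases Finset.mem_insert.1 hn with rfl | hnL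
  · have hIe : I = ∅ := by
      rw [Finset.eq_empty_iff_forall_notMem]
      intro j hj
      have := hI hj
      rw [Finset.mem_filter] at this
      obtain ⟨h1, h2⟩ := this
      rcases Finset.mem_insert.1 h1 with h | h
      · omega
      · have := hmin j h; omega
    rw [hIe, secDensτ_empty]
    simp
  · by_cases hlI : l ∈ I
    · have hI'sub : I.erase l ⊆ L.filter (· < n) := by
        intro j hj
        have hjI : j ∈ I := Finset.mem_of_mem_erase hj
        have hjne : j ≠ l := Finset.ne_of_mem_erase hj
        have h := hI hjI
        rw [Finset.mem_filter] at h ⊢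
        rcases Finset.mem_insert.1 h.1 with h' | h'
        · exact absurd h' hjne
        · exact ⟨h', h.2⟩
      have h1 := hP A hA n hnL (I.erase l) hI'sub y
      have h2 : |secDensτ k n τ I y A - secDensτ k n τ (I.erase l) y A| ≤ δ := by
        by_contra hcon
        push_neg at hcon
        exact hgood ⟨A, hA, n, hnL, I.erase l, hI'sub, y, by
          rwa [Finset.insert_erase hlI]⟩
      have hcard : I.card = (I.erase l).card + 1 := by
        rw [Finset.card_erase_of_mem hlI]
        have : 0 < I.card := Finset.card_pos.2 ⟨l, hlI⟩
        omega
      calc |secDensτ k n τ I y A - _root_.dens k n A|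
          ≤ |secDensτ k n τ I y A - secDensτ k n τ (I.erase l) y A|
            + |secDensτ k n τ (I.erase l) y A - _root_.dens k n A| := abs_sub_le _ _ _
        _ ≤ δ + δ * (I.erase l).card := add_le_add h2 h1
        _ = δ * I.card := by rw [hcard]; push_cast; ring
    · have hIsub : I ⊆ L.filter (· < n) := by
        intro j hj
        have h := hI hj
        rw [Finset.mem_filter] at h ⊢
        rcases Finset.mem_insert.1 h.1 with h' | h'
        · exact absurd (h' ▸ hj) hlI
        · exact ⟨h', h.2⟩
      exact hP A hA n hnL I hIsub y

lemma sparse_mono {τ : ℕ} {L L' : Finset ℕ} (h : L ⊆ L') (hs : Sparse τ L') : Sparse τ L :=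
  fun a ha b hb hab => hs a (h ha) b (h hb) hab

open scoped Classical in
lemma greedy {k τ : ℕ} (δ : ℝ) (hδ : 0 ≤ δ) (F : Finset (Set (Word k))) (ℓtot : ℕ) (C : ℕ)
    (hC : ∀ L M : Finset ℕ, Sparse τ (M ∪ L) → (∀ m ∈ M, ∀ x ∈ L, m < x) →
      L.card ≤ ℓtot → (M.filter (OBad k τ δ F L)).card ≤ C) :
    ∀ j : ℕ, ∀ L M : Finset ℕ, Sparse τ (M ∪ L) → Disjoint M L →
      (∀ m ∈ M, ∀ x ∈ L, m < x) → PInv k τ δ F L → L.card + j ≤ ℓtot →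
      (C + 1) * j ≤ M.card →
      ∃ L₂ : Finset ℕ, L ⊆ L₂ ∧ L₂ ⊆ L ∪ M ∧ L₂.card = L.card + j ∧ PInv k τ δ F L₂ := by
  intro j
  induction j with
  | zero =>
    intro L M _ _ _ hP _ _
    exact ⟨L, subset_refl L, Finset.subset_union_left, by simp, hP⟩
  | succ j ih =>
    intro L M hsp hdisj hbelow hP hcap hcard
    set G := M \ M.filter (OBad k τ δ F L) with hG
    have hGcard : (C + 1) * j + 1 ≤ G.card := by
      have h1 := hC L M hsp hbelow (by omega)
      have h2 : G.card = M.card - (M.filter (OBad k τ δ F L)).card :=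
        Finset.card_sdiff_of_subset (Finset.filter_subset _ _)
      have h3 : (C + 1) * (j + 1) = (C + 1) * j + C + 1 := by ring
      omega
    have hGne : G.Nonempty := Finset.card_pos.1 (by omega)
    set l := G.max' hGne with hldef
    have hlG : l ∈ G := G.max'_mem hGne
    have hlM : l ∈ M := (Finset.mem_sdiff.1 hlG).1
    have hlgood : ¬ OBad k τ δ F L l := by
      intro hc
      exact (Finset.mem_sdiff.1 hlG).2 (Finset.mem_filter.2 ⟨hlM, hc⟩)
    set M₂ := M.filter (· < l) with hM₂
    have hM₂card : (C + 1) * j ≤ M₂.card := by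
      have hsub : G.erase l ⊆ M₂ := by
        intro g hg
        have hgG : g ∈ G := Finset.mem_of_mem_erase hg
        have hgne : g ≠ l := Finset.ne_of_mem_erase hg
        have hgM : g ∈ M := (Finset.mem_sdiff.1 hgG).1
        have hgle : g ≤ l := G.le_max' g hgG
        exact Finset.mem_filter.2 ⟨hgM, lt_of_le_of_ne hgle hgne⟩
      have := Finset.card_le_card hsub
      rw [Finset.card_erase_of_mem hlG] at this
      omega
    have hlL : l ∉ L := Finset.disjoint_left.1 hdisj hlM
    have hsubset : M₂ ∪ insert l L ⊆ M ∪ L := by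
      intro x hx
      rcases Finset.mem_union.1 hx with h | h
      · exact Finset.mem_union_left _ (Finset.filter_subset _ _ h)
      · rcases Finset.mem_insert.1 h with rfl | h
        · exact Finset.mem_union_left _ hlM
        · exact Finset.mem_union_right _ h
    have hspnew : Sparse τ (M₂ ∪ insert l L) := sparse_mono hsubset hsp
    have hdisjnew : Disjoint M₂ (insert l L) := by
      rw [Finset.disjoint_left]
      intro x hx hx'
      obtain ⟨hxM, hxl⟩ := Finset.mem_filter.1 hx
      rcases Finset.mem_insert.1 hx' with rfl | h
      · omega
      · exact Finset.disjoint_left.1 hdisj hxM h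
    have hbelownew : ∀ m ∈ M₂, ∀ x ∈ insert l L, m < x := by
      intro m hm x hx
      obtain ⟨hmM, hml⟩ := Finset.mem_filter.1 hm
      rcases Finset.mem_insert.1 hx with rfl | h
      · exact hml
      · exact hbelow m hmM x h
    have hPnew : PInv k τ δ F (insert l L) :=
      step δ hδ F L l (fun x hx => hbelow l hlM x hx) hP hlgood
    obtain ⟨L₂, h1, h2, h3, h4⟩ := ih (insert l L) M₂ hspnew hdisjnew hbelownew hPnew
      (by rw [Finset.card_insert_of_notMem hlL]; omega) hM₂card
    refine ⟨L₂, fun x hx => h1 (Finset.mem_insert_of_mem hx), ?_, ?_, h4⟩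
    · intro x hx
      rcases Finset.mem_union.1 (h2 hx) with h | h
      · rcases Finset.mem_insert.1 h with rfl | h
        · exact Finset.mem_union_right _ hlM
        · exact Finset.mem_union_left _ h
      · exact Finset.mem_union_right _ (Finset.filter_subset _ _ h)
    · rw [h3, Finset.card_insert_of_notMem hlL]
      omega

end SR

/-- Lemma 11.4: the regularity lemma for `τ`-sparse sets of levels. -/
theorem sparse_regularity_lemma (ε : ℝ) (hε0 : 0 < ε) (hε1 : ε ≤ 1) (k ℓ q τ : ℕ)
    (hk : 2 ≤ k) (hℓ : 1 ≤ ℓ) (hq : 1 ≤ q) (hτ : 1 ≤ τ) :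
    ∃ n : ℕ, ∀ N : Finset ℕ, Sparse τ N → n ≤ N.card →
      ∀ F : Finset (Set (Word k)), F.card = q →
        ∃ L : Finset ℕ, L ⊆ N ∧ L.card = ℓ ∧ RegularFamilyτ k ε τ L F := by
  classical
  set δ : ℝ := ε / ℓ with hδdef
  have hℓR : (0 : ℝ) < ℓ := by exact_mod_cast hℓ
  have hδ0 : 0 < δ := div_pos hε0 hℓR
  set CB : ℝ := (q : ℝ) * ℓ * 2 ^ ℓ * (k : ℝ) ^ (2 * (τ * ℓ) + 2 * τ) with hCB
  set C : ℕ := ⌈CB / δ ^ 2⌉₊ with hCdef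
  refine ⟨(C + 1) * ℓ, ?_⟩
  intro N hN hNcard F hF
  have hk0 : 0 < k := by omega
  have hτ0 : 0 < τ := hτ
  have hC : ∀ L M : Finset ℕ, Sparse τ (M ∪ L) → (∀ m ∈ M, ∀ x ∈ L, m < x) →
      L.card ≤ ℓ → (M.filter (SR.OBad k τ δ F L)).card ≤ C := by
    intro L M hsp hbelow hLc
    have hb := SR.badcount hk0 hτ0 δ hδ0 F L M hsp hbelow
    have hmono : (F.card : ℝ) * L.card * 2 ^ L.card
        * (k : ℝ) ^ (2 * (τ * L.card) + 2 * τ) ≤ CB := by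
      rw [hCB, hF]
      have e1 : (L.card : ℝ) ≤ (ℓ : ℝ) := by exact_mod_cast hLc
      have e2 : (2 : ℝ) ^ L.card ≤ 2 ^ ℓ := pow_le_pow_right₀ one_le_two hLc
      have e3 : (k : ℝ) ^ (2 * (τ * L.card) + 2 * τ) ≤ (k : ℝ) ^ (2 * (τ * ℓ) + 2 * τ) := by
        apply pow_le_pow_right₀ (by exact_mod_cast hk0)
        have : τ * L.card ≤ τ * ℓ := Nat.mul_le_mul_left τ hLc
        omega
      have hp1 : (0:ℝ) ≤ (q : ℝ) := by positivity
      have hp2 : (0:ℝ) ≤ (L.card : ℝ) := by positivity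
      have hp3 : (0:ℝ) ≤ (2:ℝ) ^ L.card := by positivity
      have hp4 : (0:ℝ) ≤ (k : ℝ) ^ (2 * (τ * L.card) + 2 * τ) := by positivity
      gcongr
    have hfinal : ((M.filter (SR.OBad k τ δ F L)).card : ℝ) ≤ (C : ℝ) := by
      have h1 : ((M.filter (SR.OBad k τ δ F L)).card : ℝ) ≤ CB / δ ^ 2 := by
        rw [le_div_iff₀ (by positivity)]
        exact le_trans hb hmono
      exact le_trans h1 (Nat.le_ceil _)
    exact_mod_cast hfinal
  obtain ⟨L₂, _, hsub, hcardL, hPinv⟩ := SR.greedy δ (le_of_lt hδ0) F ℓ C hC ℓ ∅ N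
    (by rwa [Finset.union_empty]) (Finset.disjoint_empty_right _)
    (by intro m _ x hx; exact absurd hx (Finset.notMem_empty x))
    (by intro A hA n hn; exact absurd hn (Finset.notMem_empty n))
    (by simp) (by simpa using hNcard)
  refine ⟨L₂, ?_, ?_, ?_⟩
  · intro x hx
    have := hsub hx
    rwa [Finset.empty_union] at this
  · rw [hcardL]; simp
  · intro A hA n hn I hI y
    have h := hPinv A hA n hn I hI y
    have hIc : I.card ≤ ℓ := by
      have h1 : I ⊆ L₂ := hI.trans (Finset.filter_subset _ _)
      have h2 := Finset.card_le_card h1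
      rw [hcardL] at h2
      simpa using h2
    calc |secDensτ k n τ I y A - dens k n A| ≤ δ * I.card := h
      _ ≤ δ * ℓ := by
          apply mul_le_mul_of_nonneg_left _ (le_of_lt hδ0)
          exact_mod_cast hIc
      _ = ε := by rw [hδdef]; field_simp
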